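/- Let a ∈ ℝ and suppose P : ℝ → ℝ is a positive twice differentiable function on an open interval of Z > 0 satisfying the b = 2 similarity equation P'' = (P')²/P - P'/Z + (2P² + a)/Z - 1/P, and suppose also that P₊ := Z(P' + 1)/(2P²) + (-1 - a)/(2P) is nonvanishing on this interval. Then P₊ satisfies the same equation with a replaced by a + 2: P₊'' = (P₊')²/P₊ - P₊'/Z + (2P₊² + a + 2)/Z - 1/P₊. -/

import Mathlib

/-- The derivative of the Bäcklund-transformed solution, after using the ODE. -/
noncomputable def backF (a : ℝ) (P : ℝ → ℝ) : ℝ → ℝ := fun Z =>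
  (P Z * (1 + 2 * (P Z) ^ 2 + a + (1 + a) * deriv P Z) - Z * (deriv P Z + 1) ^ 2)
    / (2 * (P Z) ^ 3)

/-- Bäcklund transformation for the `b = 2` similarity equation:
if `P` solves `P'' = (P')²/P - P'/Z + (2P² + a)/Z - 1/P` on an open interval of
positive `Z`, then `P₊ = Z(P'+1)/(2P²) + (-1-a)/(2P)`, where nonvanishing,
solves the same equation with `a` replaced by `a + 2`. -/
theorem backlund_camassa_holm (a : ℝ) (s : Set ℝ) (hs : IsOpen s)
    (hsub : s ⊆ Set.Ioi (0 : ℝ)) (hconn : s.OrdConnected)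
    (P : ℝ → ℝ)
    (hPdiff : ∀ Z ∈ s, DifferentiableAt ℝ P Z)
    (hPdiff2 : ∀ Z ∈ s, DifferentiableAt ℝ (deriv P) Z)
    (hPpos : ∀ Z ∈ s, 0 < P Z)
    (hode : ∀ Z ∈ s, deriv (deriv P) Z =
      (deriv P Z) ^ 2 / P Z - deriv P Z / Z + (2 * (P Z) ^ 2 + a) / Z - 1 / P Z)
    (Pp : ℝ → ℝ)
    (hPp : ∀ Z : ℝ, Pp Z = Z * (deriv P Z + 1) / (2 * (P Z) ^ 2)
      + (-1 - a) / (2 * P Z))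
    (hPpne : ∀ Z ∈ s, Pp Z ≠ 0) :
    ∀ Z ∈ s, deriv (deriv Pp) Z =
      (deriv Pp Z) ^ 2 / Pp Z - deriv Pp Z / Z
        + (2 * (Pp Z) ^ 2 + (a + 2)) / Z - 1 / Pp Z := by
  have hPpfun : Pp = fun Z => Z * (deriv P Z + 1) / (2 * (P Z) ^ 2)
      + (-1 - a) / (2 * P Z) := funext hPp
  have key : ∀ Z ∈ s, HasDerivAt Pp (backF a P Z) Z := by
    intro Z hZ
    have hZ0 : (0 : ℝ) < Z := hsub hZ
    have hp0 : P Z ≠ 0 := (hPpos Z hZ).ne'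
    have hp : HasDerivAt P (deriv P Z) Z := (hPdiff Z hZ).hasDerivAt
    have hq : HasDerivAt (deriv P) (deriv (deriv P) Z) Z := (hPdiff2 Z hZ).hasDerivAt
    have h1 : HasDerivAt (fun Z => Z * (deriv P Z + 1))
        (1 * (deriv P Z + 1) + Z * deriv (deriv P) Z) Z :=
      (hasDerivAt_id Z).mul (hq.add_const 1)
    have h2 := (hp.pow 2).const_mul (2 : ℝ)
    have hne1 : 2 * (P Z) ^ 2 ≠ 0 := by positivity
    have hne2 : 2 * P Z ≠ 0 := by positivity
    have h3 := h1.div h2 hne1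
    have h4 := (hasDerivAt_const Z (-1 - a)).div (hp.const_mul (2 : ℝ)) hne2
    have hD := h3.add h4
    rw [hPpfun]
    refine HasDerivAt.congr_deriv hD ?_
    rw [hode Z hZ]
    simp only [backF, Pi.pow_apply]
    field_simp
    ring
  intro Z hZ
  have hZ0 : (0 : ℝ) < Z := hsub hZ
  have hp0 : P Z ≠ 0 := (hPpos Z hZ).ne'
  have hp : HasDerivAt P (deriv P Z) Z := (hPdiff Z hZ).hasDerivAt
  have hq : HasDerivAt (deriv P) (deriv (deriv P) Z) Z := (hPdiff2 Z hZ).hasDerivAt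
  have hev : deriv Pp =ᶠ[nhds Z] backF a P :=
    Filter.eventuallyEq_of_mem (hs.mem_nhds hZ) (fun t ht => (key t ht).deriv)
  have hdd : deriv (deriv Pp) Z = deriv (backF a P) Z := hev.deriv_eq
  -- derivative of backF at Z
  have hA := (hp.pow 2).const_mul (2 : ℝ)
  have hB := hA.const_add (1 : ℝ)
  have hC := hB.add_const a
  have hD' := hq.const_mul (1 + a)
  have hE := hC.add hD'
  have hN1 := hp.mul hE
  have hF2 := (hasDerivAt_id Z).mul ((hq.add_const 1).pow 2)
  have hnum := hN1.sub hF2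
  have hden := (hp.pow 3).const_mul (2 : ℝ)
  have hne3 : 2 * (P Z) ^ 3 ≠ 0 := by positivity
  have hFd := hnum.div hden hne3
  have hFd' : HasDerivAt (backF a P)
      (((deriv P Z * (1 + 2 * P Z ^ 2 + a + (1 + a) * deriv P Z) +
              P Z * (2 * (((2:ℕ):ℝ) * P Z ^ (2 - 1) * deriv P Z) + (1 + a) * deriv (deriv P) Z) -
            (1 * (deriv P Z + 1) ^ 2 + id Z * (((2:ℕ):ℝ) * (deriv P Z + 1) ^ (2 - 1) * deriv (deriv P) Z))) *
          (2 * P Z ^ 3) -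
        (P Z * (1 + 2 * P Z ^ 2 + a + (1 + a) * deriv P Z) - id Z * (deriv P Z + 1) ^ 2) *
          (2 * (((3:ℕ):ℝ) * P Z ^ (3 - 1) * deriv P Z))) /
      (2 * P Z ^ 3) ^ 2) Z := hFd
  -- relation for Pp Z
  have hw : Pp Z = (Z * (deriv P Z + 1) + (-1 - a) * P Z) / (2 * (P Z) ^ 2) := by
    rw [hPp]; field_simp
  have hwne : Z * (deriv P Z + 1) + (-1 - a) * P Z ≠ 0 := by
    intro h
    exact hPpne Z hZ (by rw [hw, h, zero_div])
  rw [hdd, hFd'.deriv, (key Z hZ).deriv, hode Z hZ, hw]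
  simp only [backF, id]
  push_cast
  have hwne' : Z * (deriv P Z + 1) + P Z * (-1 - a) ≠ 0 := by
    intro h; apply hwne; linear_combination h
  field_simp
  ring
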